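/- Let G be a finite simple graph with vertex set V, let P be a predicate on subsets of V, and let S, S' ⊆ V with |S| = |S'| = k, both satisfying P, such that at least one TJ(P)-sequence from S to S' exists. Let C_1, …, C_t be pairwise disjoint subsets of V, each disjoint from S ∪ S', such that for every pair p ≠ q there exists a graph automorphism η of G with η(C_p) = C_q, η(C_q) = C_p, η(v) = v for every v ∉ C_p ∪ C_q, and P(X) holds if and only if P(η(X)) holds for every X ⊆ V. If t > k, then for every I ⊆ {1,…,t} with |I| = k there is a TJ(P)-sequence S_0, …, S_ℓ from S to S' of minimum length such that for every i ∉ I and every 0 ≤ j ≤ ℓ, C_i ∩ S_j = ∅. -/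

import Mathlib

/-- `TJSeq P seq ℓ S S'` : the sequence `seq 0, …, seq ℓ` is a TJ(P)-sequence from
`S` to `S'` (of length `ℓ`): consecutive sets differ by a single token jump and
all sets satisfy `P`. -/
def TJSeq {α : Type*} [DecidableEq α] (P : Finset α → Prop)
    (seq : ℕ → Finset α) (ℓ : ℕ) (S S' : Finset α) : Prop :=
  seq 0 = S ∧ seq ℓ = S' ∧ (∀ i ≤ ℓ, P (seq i)) ∧
    ∀ i < ℓ, (seq i \ seq (i + 1)).card = 1 ∧ (seq (i + 1) \ seq i).card = 1


private lemma image_fixed {α : Type*} [DecidableEq α] {f : α → α} {X : Finset α}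
    (h : ∀ x ∈ X, f x = x) : X.image f = X := by
  rw [Finset.image_congr (g := id) h, Finset.image_id]

private lemma tj_card {α : Type*} [DecidableEq α] {P : Finset α → Prop}
    {seq : ℕ → Finset α} {ℓ : ℕ} {S S' : Finset α}
    (h : TJSeq P seq ℓ S S') : ∀ j, j ≤ ℓ → (seq j).card = S.card := by
  intro j
  induction j with
  | zero => intro _; rw [h.1]
  | succ m ih =>
    intro hj
    have hstep := h.2.2.2 m (by omega)
    have h1 := Finset.card_sdiff_add_card_inter (seq m) (seq (m+1))
    have h2 := Finset.card_sdiff_add_card_inter (seq (m+1)) (seq m)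
    rw [Finset.inter_comm] at h2
    have ihm := ih (by omega)
    have e1 := hstep.1
    have e2 := hstep.2
    omega

/-- Let `G` be a finite graph, `P` a predicate on vertex subsets, and
`S, S'` two sets of size `k` satisfying `P` with some TJ(P)-sequence between them.
Let `C 1, …, C t` be pairwise disjoint sets, disjoint from `S ∪ S'`, any two of which
can be swapped by a `P`-preserving automorphism of `G` fixing all other vertices.
If `t > k`, then for every `k`-element `I ⊆ {1,…,t}` there is a minimum-length
TJ(P)-sequence from `S` to `S'` avoiding all `C i` with `i ∉ I`. -/
theorem stmt9 {α : Type*} [DecidableEq α] [Fintype α] (G : SimpleGraph α)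
    (P : Finset α → Prop) (k : ℕ) (S S' : Finset α)
    (hS : P S) (hS' : P S') (hkS : S.card = k) (hkS' : S'.card = k)
    (hex : ∃ (seq : ℕ → Finset α) (ℓ : ℕ), TJSeq P seq ℓ S S')
    (t : ℕ) (C : Fin t → Finset α)
    (hdisj : ∀ p q : Fin t, p ≠ q → Disjoint (C p) (C q))
    (hSS' : ∀ i, Disjoint (C i) (S ∪ S'))
    (hauto : ∀ p q : Fin t, p ≠ q → ∃ η : G ≃g G,
      (C p).image (fun v => η v) = C q ∧ (C q).image (fun v => η v) = C p ∧
      (∀ v, v ∉ C p ∪ C q → η v = v) ∧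
      (∀ X : Finset α, P X ↔ P (X.image (fun v => η v))))
    (htk : k < t) (I : Finset (Fin t)) (hI : I.card = k) :
    ∃ (seq : ℕ → Finset α) (ℓ : ℕ), TJSeq P seq ℓ S S' ∧
      (∀ (seq' : ℕ → Finset α) (ℓ' : ℕ), TJSeq P seq' ℓ' S S' → ℓ ≤ ℓ') ∧
      ∀ i : Fin t, i ∉ I → ∀ j ≤ ℓ, C i ∩ seq j = ∅ := by
  classical
  obtain ⟨seq0, ℓ0, h0⟩ := hex
  have hQ : ∃ m, ∃ s : ℕ → Finset α, TJSeq P s m S S' := ⟨ℓ0, seq0, h0⟩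
  obtain ⟨seq, hseq⟩ := Nat.find_spec hQ
  set ℓ := Nat.find hQ with hldef
  have hmin : ∀ (s' : ℕ → Finset α) (l' : ℕ), TJSeq P s' l' S S' → ℓ ≤ l' :=
    fun s' l' h' => Nat.find_le ⟨s', h'⟩
  have hgoodS : ∀ i : Fin t, C i ∩ S = ∅ := fun i =>
    Finset.disjoint_iff_inter_eq_empty.mp ((hSS' i).mono_right Finset.subset_union_left)
  have key : ∀ n (s : ℕ → Finset α), TJSeq P s ℓ S S' →
      (∀ j, j + n ≤ ℓ → ∀ i ∉ I, C i ∩ s j = ∅) →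
      ∃ s', TJSeq P s' ℓ S S' ∧ ∀ j ≤ ℓ, ∀ i ∉ I, C i ∩ s' j = ∅ := by
    intro n
    induction n with
    | zero => exact fun s hs hg => ⟨s, hs, fun j hj => hg j (by omega)⟩
    | succ n ih =>
      intro s hs hg
      by_cases hle : n + 1 ≤ ℓ
      · obtain ⟨e, hdn⟩ : ∃ e, (e + 1) + n = ℓ := ⟨ℓ - n - 1, by omega⟩
        by_cases hgood : ∀ i ∉ I, C i ∩ s (e+1) = ∅
        · refine ih s hs (fun j hj i hi => ?_)
          rcases Nat.lt_or_ge j (e+1) with h | h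
          · exact hg j (by omega) i hi
          · have hje : j = e + 1 := by omega
            rw [hje]; exact hgood i hi
        · push_neg at hgood
          obtain ⟨i, hiI, hibad⟩ := hgood
          have hstep := hs.2.2.2 e (by omega)
          obtain ⟨u, hu⟩ := Finset.card_eq_one.mp hstep.1
          obtain ⟨v, hv⟩ := Finset.card_eq_one.mp hstep.2
          have humem : u ∈ s e ∧ u ∉ s (e+1) := by
            have : u ∈ s e \ s (e+1) := by rw [hu]; exact Finset.mem_singleton_self u
            exact Finset.mem_sdiff.mp this
          have hvmem : v ∈ s (e+1) ∧ v ∉ s e := by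
            have : v ∈ s (e+1) \ s e := by rw [hv]; exact Finset.mem_singleton_self v
            exact Finset.mem_sdiff.mp this
          have hu' : ∀ x, x ∈ s e → x ∉ s (e+1) → x = u := by
            intro x h1 h2
            have : x ∈ s e \ s (e+1) := Finset.mem_sdiff.mpr ⟨h1, h2⟩
            rw [hu] at this; exact Finset.mem_singleton.mp this
          have hv' : ∀ x, x ∈ s (e+1) → x ∉ s e → x = v := by
            intro x h1 h2
            have : x ∈ s (e+1) \ s e := Finset.mem_sdiff.mpr ⟨h1, h2⟩
            rw [hv] at this; exact Finset.mem_singleton.mp this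
          have hgprev : ∀ i' ∉ I, C i' ∩ s e = ∅ := fun i' hi' => hg e (by omega) i' hi'
          have hbadsub : ∀ i', i' ∉ I → ∀ x ∈ C i' ∩ s (e+1), x = v := by
            intro i' hi' x hx
            obtain ⟨hx1, hx2⟩ := Finset.mem_inter.mp hx
            by_cases hxe : x ∈ s e
            · exact absurd (hgprev i' hi' ▸ Finset.mem_inter.mpr ⟨hx1, hxe⟩)
                (Finset.notMem_empty x)
            · exact hv' x hx2 hxe
          have hvCi : v ∈ C i := by
            obtain ⟨x, hx⟩ := hibad
            have hxv := hbadsub i hiI x hx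
            rw [← hxv]; exact (Finset.mem_inter.mp hx).1
          have hcard : (s (e+1)).card = k := (tj_card hs (e+1) (by omega)).trans hkS
          have hq : ∃ q ∈ I, C q ∩ s (e+1) = ∅ := by
            by_contra hcon
            push_neg at hcon
            have hF : ∀ q : Fin t, ∃ x, q ∈ I → x ∈ C q ∩ s (e+1) := by
              intro q
              by_cases hqI : q ∈ I
              · obtain ⟨x, hx⟩ := (hcon q hqI)
                exact ⟨x, fun _ => hx⟩
              · exact ⟨v, fun h => absurd h hqI⟩
            choose F hF using hF
            have hmaps : ∀ q ∈ I, F q ∈ (s (e+1)).erase v := by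
              intro q hqI
              obtain ⟨hx1, hx2⟩ := Finset.mem_inter.mp (hF q hqI)
              refine Finset.mem_erase.mpr ⟨fun hxy => ?_, hx2⟩
              have hne : q ≠ i := fun h => hiI (h ▸ hqI)
              exact (Finset.disjoint_left.mp (hdisj q i hne) hx1) (hxy ▸ hvCi)
            have hinjOn : Set.InjOn F I := by
              intro q1 h1 q2 h2 heq
              by_contra hne
              exact (Finset.disjoint_left.mp (hdisj q1 q2 hne)
                (Finset.mem_inter.mp (hF q1 h1)).1)
                (heq ▸ (Finset.mem_inter.mp (hF q2 h2)).1)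
            have hle2 := Finset.card_le_card_of_injOn F hmaps hinjOn
            rw [Finset.card_erase_of_mem hvmem.1, hcard, hI] at hle2
            have hk1 : 1 ≤ k := by
              rw [← hcard]; exact Finset.card_pos.mpr ⟨v, hvmem.1⟩
            omega
          obtain ⟨q, hqI, hqd⟩ := hq
          have hiq : i ≠ q := fun h => hiI (h ▸ hqI)
          obtain ⟨η, hC1, hC2, hfix, hP⟩ := hauto i q hiq
          have hinj : Function.Injective (fun x : α => η x) := fun a b hab => η.injective hab
          have himstep : ∀ A B : Finset α, (A \ B).card = 1 →
              ((A.image (fun x => η x)) \ (B.image (fun x => η x))).card = 1 := by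
            intro A B hAB
            rw [← Finset.image_sdiff _ _ hinj, Finset.card_image_of_injective _ hinj, hAB]
          have hηv : η v ∈ C q := by
            have : η v ∈ (C i).image (fun x => η x) := Finset.mem_image_of_mem _ hvCi
            rwa [hC1] at this
          have hS'fix : S'.image (fun x => η x) = S' := by
            refine image_fixed (fun x hx => hfix x ?_)
            intro hmem
            rcases Finset.mem_union.mp hmem with h | h
            · exact (Finset.disjoint_left.mp (hSS' i) h) (Finset.mem_union_right S hx)
            · exact (Finset.disjoint_left.mp (hSS' q) h) (Finset.mem_union_right S hx)
          have himage : (s (e+1)).image (fun x => η x) = insert (η v) (s (e+1) \ {v}) := by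
            have hrep : s (e+1) = insert v (s (e+1) \ {v}) := by
              rw [Finset.sdiff_singleton_eq_erase, Finset.insert_erase hvmem.1]
            conv_lhs => rw [hrep]
            rw [Finset.image_insert]
            congr 1
            refine image_fixed (fun x hx => ?_)
            obtain ⟨hx1, hx2⟩ := Finset.mem_sdiff.mp hx
            refine hfix x (fun hmem => ?_)
            rcases Finset.mem_union.mp hmem with h | h
            · exact hx2 (Finset.mem_singleton.mpr
                (hbadsub i hiI x (Finset.mem_inter.mpr ⟨h, hx1⟩)))
            · exact Finset.notMem_empty x (hqd ▸ Finset.mem_inter.mpr ⟨h, hx1⟩)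
          by_cases hcase : η v ∈ s e
          · -- collision case: η v = u, contradiction with minimality
            exfalso
            have hηvne : η v ∉ s (e+1) := fun h =>
              Finset.notMem_empty _ (hqd ▸ Finset.mem_inter.mpr ⟨hηv, h⟩)
            have huv : η v = u := hu' _ hcase hηvne
            have hcollapse : (s (e+1)).image (fun x => η x) = s e := by
              rw [himage, huv]
              ext x
              simp only [Finset.mem_insert, Finset.mem_sdiff, Finset.mem_singleton]
              constructor
              · rintro (rfl | ⟨hx1, hx2⟩)
                · exact humem.1
                · by_contra hxe
                  exact hx2 (hv' x hx1 hxe)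
              · intro hx
                by_cases hxd : x ∈ s (e+1)
                · exact Or.inr ⟨hxd, fun h => hvmem.2 (h ▸ hx)⟩
                · exact Or.inl (hu' x hx hxd)
            refine absurd (hmin (fun j => if j < e + 1 then s j
              else (s (j+1)).image (fun x => η x)) (ℓ-1) ⟨?_, ?_, ?_, ?_⟩) (by omega)
            · show (if 0 < e + 1 then s 0 else _) = S
              rw [if_pos (by omega)]; exact hs.1
            · by_cases hc : ℓ - 1 < e + 1
              · show (if ℓ - 1 < e + 1 then s (ℓ-1) else _) = S'
                have h1 : ℓ - 1 = e := by omega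
                have h2 : e + 1 = ℓ := by omega
                rw [if_pos hc, h1, ← hcollapse, h2, hs.2.1, hS'fix]
              · show (if ℓ - 1 < e + 1 then _ else (s (ℓ-1+1)).image (fun x => η x)) = S'
                have h1 : ℓ - 1 + 1 = ℓ := by omega
                rw [if_neg hc, h1, hs.2.1, hS'fix]
            · intro j hj
              show P (if j < e + 1 then s j else (s (j+1)).image (fun x => η x))
              by_cases hc : j < e + 1
              · rw [if_pos hc]; exact hs.2.2.1 j (by omega)
              · rw [if_neg hc]; exact (hP _).mp (hs.2.2.1 (j+1) (by omega))
            · intro j hj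
              show ((if j < e + 1 then s j else (s (j+1)).image (fun x => η x)) \
                  (if j + 1 < e + 1 then s (j+1) else (s (j+1+1)).image (fun x => η x))).card = 1 ∧
                ((if j + 1 < e + 1 then s (j+1) else (s (j+1+1)).image (fun x => η x)) \
                  (if j < e + 1 then s j else (s (j+1)).image (fun x => η x))).card = 1
              by_cases hc1 : j + 1 < e + 1
              · rw [if_pos hc1, if_pos (by omega)]
                exact hs.2.2.2 j (by omega)
              · by_cases hc2 : j < e + 1
                · -- j = e
                  have hje : j = e := by omega
                  rw [if_pos hc2, if_neg hc1, hje, ← hcollapse]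
                  exact ⟨himstep _ _ (hs.2.2.2 (e+1) (by omega)).1,
                    himstep _ _ (hs.2.2.2 (e+1) (by omega)).2⟩
                · rw [if_neg hc1, if_neg hc2]
                  exact ⟨himstep _ _ (hs.2.2.2 (j+1) (by omega)).1,
                    himstep _ _ (hs.2.2.2 (j+1) (by omega)).2⟩
          · -- no collision: swap C i and C q from time e+1 on
            have hAB : s e \ ((s (e+1)).image (fun x => η x)) = {u} := by
              rw [himage]
              ext x
              simp only [Finset.mem_sdiff, Finset.mem_insert, Finset.mem_singleton, not_or]
              constructor
              · rintro ⟨hx1, hx2, hx3⟩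
                refine hu' x hx1 (fun hxd => ?_)
                exact hx3 ⟨hxd, fun h => hvmem.2 (h ▸ hx1)⟩
              · rintro rfl
                exact ⟨humem.1, fun h => hcase (h ▸ humem.1), fun h => humem.2 h.1⟩
            have hBA : ((s (e+1)).image (fun x => η x)) \ s e = {η v} := by
              rw [himage]
              ext x
              simp only [Finset.mem_sdiff, Finset.mem_insert, Finset.mem_singleton]
              constructor
              · rintro ⟨rfl | ⟨hx1, hx2⟩, hx3⟩
                · rfl
                · exact absurd (hv' x hx1 hx3) hx2
              · rintro rfl
                exact ⟨Or.inl rfl, hcase⟩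
            have hgnew : ∀ i', i' ∉ I → C i' ∩ ((s (e+1)).image (fun x => η x)) = ∅ := by
              intro i' hi'
              rw [himage]
              refine Finset.eq_empty_iff_forall_notMem.mpr (fun x hx => ?_)
              obtain ⟨hxC, hxB⟩ := Finset.mem_inter.mp hx
              rcases Finset.mem_insert.mp hxB with rfl | hxB'
              · exact Finset.disjoint_left.mp (hdisj q i' (fun h => hi' (h ▸ hqI))) hηv hxC
              · obtain ⟨hx1, hx2⟩ := Finset.mem_sdiff.mp hxB'
                exact hx2 (Finset.mem_singleton.mpr
                  (hbadsub i' hi' x (Finset.mem_inter.mpr ⟨hxC, hx1⟩)))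
            have hTJ' : TJSeq P (fun j => if j < e + 1 then s j
                else (s j).image (fun x => η x)) ℓ S S' := by
              refine ⟨?_, ?_, ?_, ?_⟩
              · show (if 0 < e + 1 then s 0 else _) = S
                rw [if_pos (by omega)]; exact hs.1
              · show (if ℓ < e + 1 then _ else (s ℓ).image (fun x => η x)) = S'
                rw [if_neg (by omega), hs.2.1, hS'fix]
              · intro j hj
                show P (if j < e + 1 then s j else (s j).image (fun x => η x))
                by_cases hc : j < e + 1
                · rw [if_pos hc]; exact hs.2.2.1 j hj
                · rw [if_neg hc]; exact (hP _).mp (hs.2.2.1 j hj)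
              · intro j hj
                show ((if j < e + 1 then s j else (s j).image (fun x => η x)) \
                    (if j + 1 < e + 1 then s (j+1) else (s (j+1)).image (fun x => η x))).card = 1 ∧
                  ((if j + 1 < e + 1 then s (j+1) else (s (j+1)).image (fun x => η x)) \
                    (if j < e + 1 then s j else (s j).image (fun x => η x))).card = 1
                by_cases hc1 : j + 1 < e + 1
                · rw [if_pos hc1, if_pos (by omega)]
                  exact hs.2.2.2 j hj
                · by_cases hc2 : j < e + 1
                  · have hje : j = e := by omega
                    rw [if_pos hc2, if_neg hc1, hje]
                    rw [hAB, hBA]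
                    exact ⟨Finset.card_singleton u, Finset.card_singleton (η v)⟩
                  · rw [if_neg hc1, if_neg hc2]
                    exact ⟨himstep _ _ (hs.2.2.2 j hj).1, himstep _ _ (hs.2.2.2 j hj).2⟩
            refine ih _ hTJ' (fun j hj i' hi' => ?_)
            by_cases hc : j < e + 1
            · show C i' ∩ (if j < e + 1 then s j else (s j).image (fun x => η x)) = ∅
              rw [if_pos hc]
              exact hg j (by omega) i' hi'
            · have hje : j = e + 1 := by omega
              show C i' ∩ (if j < e + 1 then s j else (s j).image (fun x => η x)) = ∅
              rw [if_neg hc, hje]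
              exact hgnew i' hi'
      · refine ih s hs (fun j hj i hi => ?_)
        have hj0 : j = 0 := by omega
        rw [hj0, hs.1]
        exact hgoodS i
  obtain ⟨s', hTJ, hgoodall⟩ := key (ℓ+1) seq hseq (fun j hj => absurd hj (by omega))
  exact ⟨s', ℓ, hTJ, hmin, fun i hi j hj => hgoodall j hj i hi⟩
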